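/- arXiv:2309.07821 — 4 statements merged into one kernel-verified Lean document; each statement's English description precedes it below -/
import Mathlib

section
/- Let 1 ≤ p ≤ ∞, 1/p + 1/q = 1 + 1/r with q,r ∈ [1,∞], and let ψ:(0,∞)→(0,∞) satisfy ψ(t) = o(t^{-(1-1/q)/2}) as t → 0⁺. Then there exists G ∈ L^p(ℝ) such that ‖G ∗ Θ_t‖_r / ψ(t) is unbounded as t → 0⁺. -/
open MeasureTheory Real ENNReal Filter Topology

/-- The Gauss–Weierstrass heat kernel on ℝ. -/
noncomputable def heatKernel (t x : ℝ) : ℝ :=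
  Real.exp (-x ^ 2 / (4 * t)) / (2 * Real.sqrt (Real.pi * t))


lemma D_pos {t : ℝ} (ht : 0 < t) : 0 < 2 * Real.sqrt (Real.pi * t) := by
  have h : 0 < Real.pi * t := mul_pos Real.pi_pos ht
  have := Real.sqrt_pos.mpr h
  linarith

lemma hk_nonneg (t x : ℝ) : 0 ≤ heatKernel t x := by
  unfold heatKernel
  positivity

lemma hk_continuous {t : ℝ} : Continuous (heatKernel t) := by
  unfold heatKernel
  fun_prop

lemma hk_le_sup {t : ℝ} (ht : 0 < t) (x : ℝ) : heatKernel t x ≤ 1 / (2 * Real.sqrt (Real.pi * t)) := by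
  unfold heatKernel
  have hD := D_pos ht
  have h1 : Real.exp (-x ^ 2 / (4 * t)) ≤ 1 := by
    rw [Real.exp_le_one_iff]
    have : 0 ≤ x ^ 2 / (4 * t) := by positivity
    rw [neg_div]
    linarith
  gcongr

lemma hk_le_decay {t x : ℝ} (ht : 0 < t) (ht1 : t ≤ 1) (hx : x ≠ 0) :
    heatKernel t x ≤ 2 / (Real.sqrt Real.pi * x ^ 2) := by
  have hx2 : 0 < x ^ 2 := by positivity
  have hπ : 0 < Real.sqrt Real.pi := Real.sqrt_pos.mpr Real.pi_pos
  have hst : 0 < Real.sqrt t := Real.sqrt_pos.mpr ht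
  have hsq : Real.sqrt t * Real.sqrt t = t := Real.mul_self_sqrt ht.le
  have hD := D_pos ht
  have h1 : Real.exp (-x ^ 2 / (4 * t)) ≤ 4 * t / x ^ 2 := by
    have hu : 0 < x ^ 2 / (4 * t) := by positivity
    have h2 : x ^ 2 / (4 * t) ≤ Real.exp (x ^ 2 / (4 * t)) := by
      have := Real.add_one_le_exp (x ^ 2 / (4 * t)); linarith
    rw [show -x ^ 2 / (4 * t) = -(x ^ 2 / (4 * t)) by ring, Real.exp_neg]
    rw [show 4 * t / x ^ 2 = (x ^ 2 / (4 * t))⁻¹ by field_simp]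
    exact inv_anti₀ hu h2
  calc heatKernel t x ≤ (4 * t / x ^ 2) / (2 * Real.sqrt (Real.pi * t)) := by
        unfold heatKernel; gcongr
    _ = 2 * Real.sqrt t / (Real.sqrt Real.pi * x ^ 2) := by
        rw [Real.sqrt_mul Real.pi_pos.le]
        rw [div_eq_div_iff (by positivity) (by positivity)]
        field_simp
        linear_combination (-4) * hsq
    _ ≤ 2 / (Real.sqrt Real.pi * x ^ 2) := by
        apply div_le_div₀ (by norm_num) (by nlinarith [Real.sqrt_le_one.mpr ht1]) (by positivity) le_rfl

lemma hk_integrable {t : ℝ} (ht : 0 < t) : Integrable (heatKernel t) := by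
  have h : heatKernel t = fun x => Real.exp (-(1 / (4 * t)) * x ^ 2) / (2 * Real.sqrt (Real.pi * t)) := by
    funext x; unfold heatKernel; rw [show -(1 / (4 * t)) * x ^ 2 = -x ^ 2 / (4 * t) by ring]
  rw [h]
  exact (integrable_exp_neg_mul_sq (by positivity)).div_const _

lemma sqrt_four_pi : Real.sqrt (4 * Real.pi) = 2 * Real.sqrt Real.pi := by
  rw [show (4 : ℝ) * Real.pi = 2 ^ 2 * Real.pi by norm_num, Real.sqrt_mul (by positivity),
    Real.sqrt_sq (by norm_num)]

lemma hk_integral {t : ℝ} (ht : 0 < t) : ∫ x, heatKernel t x = 1 := by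
  have h : heatKernel t = fun x => Real.exp (-(1 / (4 * t)) * x ^ 2) / (2 * Real.sqrt (Real.pi * t)) := by
    funext x; unfold heatKernel; rw [show -(1 / (4 * t)) * x ^ 2 = -x ^ 2 / (4 * t) by ring]
  rw [h, integral_div, integral_gaussian]
  rw [show Real.pi / (1 / (4 * t)) = 4 * (Real.pi * t) by field_simp]
  rw [show (4 : ℝ) * (Real.pi * t) = 2 ^ 2 * (Real.pi * t) by norm_num,
    Real.sqrt_mul (by positivity), Real.sqrt_sq (by norm_num)]
  have hD := D_pos ht
  field_simp

lemma hk_ge {t x : ℝ} (ht : 0 < t) (hx : |x| ≤ 2 * Real.sqrt t) :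
    Real.exp (-1) / (2 * Real.sqrt (Real.pi * t)) ≤ heatKernel t x := by
  unfold heatKernel
  have hD := D_pos ht
  have hx2 : x ^ 2 ≤ 4 * t := by
    have h1 : x ^ 2 = |x| ^ 2 := (sq_abs x).symm
    have h2 : |x| ^ 2 ≤ (2 * Real.sqrt t) ^ 2 := pow_le_pow_left₀ (abs_nonneg x) hx 2
    have h3 : (2 * Real.sqrt t) ^ 2 = 4 * t := by
      rw [mul_pow, Real.sq_sqrt ht.le]; norm_num
    linarith
  gcongr
  have h4 : x ^ 2 / (4 * t) ≤ 1 := by rw [div_le_one (by positivity)]; linarith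
  rw [neg_div]
  linarith


lemma hk_rpow_integral {t s : ℝ} (ht : 0 < t) (hs : 0 < s) :
    ∫ x, heatKernel t x ^ s =
      (2 * Real.sqrt (Real.pi * t)) ^ (-s) * Real.sqrt (Real.pi / (s / (4 * t))) := by
  have hD := D_pos ht
  have h : (fun x => heatKernel t x ^ s) =
      fun x => Real.exp (-(s / (4 * t)) * x ^ 2) * (2 * Real.sqrt (Real.pi * t)) ^ (-s) := by
    funext x
    unfold heatKernel
    rw [Real.div_rpow (Real.exp_nonneg _) hD.le, ← Real.exp_mul,
      show -x ^ 2 / (4 * t) * s = -(s / (4 * t)) * x ^ 2 by ring,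
      Real.rpow_neg hD.le, div_eq_mul_inv]
  rw [h, integral_mul_const, integral_gaussian, mul_comm]

lemma hk_rpow_integrable {t s : ℝ} (ht : 0 < t) (hs : 0 < s) :
    Integrable (fun x => heatKernel t x ^ s) := by
  have hD := D_pos ht
  have h : (fun x => heatKernel t x ^ s) =
      fun x => Real.exp (-(s / (4 * t)) * x ^ 2) * (2 * Real.sqrt (Real.pi * t)) ^ (-s) := by
    funext x
    unfold heatKernel
    rw [Real.div_rpow (Real.exp_nonneg _) hD.le, ← Real.exp_mul,
      show -x ^ 2 / (4 * t) * s = -(s / (4 * t)) * x ^ 2 by ring,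
      Real.rpow_neg hD.le, div_eq_mul_inv]
  rw [h]
  exact (integrable_exp_neg_mul_sq (by positivity)).mul_const _

lemma key_real_ineq {t s : ℝ} (ht : 0 < t) (ht1 : t ≤ 1) (hs : 1 ≤ s) :
    ((2 * Real.sqrt (Real.pi * t)) ^ (-s) * Real.sqrt (Real.pi / (s / (4 * t)))) ^ (1 / s)
      ≤ t ^ ((1 / s - 1) / 2) := by
  have hs0 : 0 < s := lt_of_lt_of_le one_pos hs
  have hD := D_pos ht
  have hst : 0 < Real.sqrt t := Real.sqrt_pos.mpr ht
  have hsπ : 0 < Real.sqrt Real.pi := Real.sqrt_pos.mpr Real.pi_pos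
  have hb : Real.pi / (s / (4 * t)) = 4 * Real.pi * t / s := by
    field_simp
  have h1 : ((2 * Real.sqrt (Real.pi * t)) ^ (-s)) ^ (1 / s)
      = (2 * Real.sqrt (Real.pi * t))⁻¹ := by
    rw [← Real.rpow_mul hD.le, show -s * (1 / s) = -1 by field_simp, Real.rpow_neg_one]
  have h2 : Real.sqrt (Real.pi / (s / (4 * t))) ^ (1 / s)
      = (4 * Real.pi * t / s) ^ (1 / (2 * s)) := by
    rw [hb, Real.sqrt_eq_rpow, ← Real.rpow_mul (by positivity)]
    congr 1
    ring
  rw [Real.mul_rpow (by positivity) (Real.sqrt_nonneg _), h1, h2]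
  have h3 : (4 * Real.pi * t / s) ^ (1 / (2 * s))
      ≤ (4 * Real.pi) ^ (1 / 2 : ℝ) * t ^ (1 / (2 * s)) := by
    calc (4 * Real.pi * t / s) ^ (1 / (2 * s)) ≤ (4 * Real.pi * t) ^ (1 / (2 * s)) := by
          apply Real.rpow_le_rpow (by positivity) (div_le_self (by positivity) hs) (by positivity)
      _ = (4 * Real.pi) ^ (1 / (2 * s)) * t ^ (1 / (2 * s)) := Real.mul_rpow (by positivity) ht.le
      _ ≤ (4 * Real.pi) ^ (1 / 2 : ℝ) * t ^ (1 / (2 * s)) := by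
          apply mul_le_mul_of_nonneg_right _ (Real.rpow_nonneg ht.le _)
          apply Real.rpow_le_rpow_of_exponent_le (by nlinarith [Real.pi_gt_three])
          apply one_div_le_one_div_of_le (by norm_num) (by linarith)
  calc (2 * Real.sqrt (Real.pi * t))⁻¹ * (4 * Real.pi * t / s) ^ (1 / (2 * s))
      ≤ (2 * Real.sqrt (Real.pi * t))⁻¹ * ((4 * Real.pi) ^ (1 / 2 : ℝ) * t ^ (1 / (2 * s))) := by
        apply mul_le_mul_of_nonneg_left h3 (by positivity)
    _ = (Real.sqrt t)⁻¹ * t ^ (1 / (2 * s)) := by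
        rw [← Real.sqrt_eq_rpow, sqrt_four_pi, Real.sqrt_mul Real.pi_pos.le]
        field_simp
    _ = t ^ (-(1 / 2) + 1 / (2 * s)) := by
        rw [Real.rpow_add ht, Real.rpow_neg ht.le, ← Real.sqrt_eq_rpow]
    _ = t ^ ((1 / s - 1) / 2) := by
        congr 1
        ring

lemma one_le_sqrt_pi : (1 : ℝ) ≤ Real.sqrt Real.pi := by
  rw [show (1 : ℝ) = Real.sqrt 1 by simp]
  exact Real.sqrt_le_sqrt (by nlinarith [Real.pi_gt_three])

lemma hk_eLpNorm_le (e : ℝ≥0∞) (he : 1 ≤ e) {t : ℝ} (ht : 0 < t) (ht1 : t ≤ 1) :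
    eLpNorm (heatKernel t) e volume ≤ ENNReal.ofReal (t ^ (((1 / e).toReal - 1) / 2)) := by
  have hD := D_pos ht
  have hst : 0 < Real.sqrt t := Real.sqrt_pos.mpr ht
  by_cases htop : e = ∞
  · subst htop
    have h0 : ((1 : ℝ≥0∞) / ⊤).toReal = 0 := by simp
    rw [h0, eLpNorm_exponent_top]
    apply eLpNormEssSup_le_of_ae_bound (C := t ^ (((0 : ℝ) - 1) / 2))
    filter_upwards with x
    rw [Real.norm_eq_abs, abs_of_nonneg (hk_nonneg t x)]
    calc heatKernel t x ≤ 1 / (2 * Real.sqrt (Real.pi * t)) := hk_le_sup ht x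
      _ ≤ t ^ (((0 : ℝ) - 1) / 2) := by
          rw [show ((0 : ℝ) - 1) / 2 = -(1 / 2) by norm_num, Real.rpow_neg ht.le,
            ← Real.sqrt_eq_rpow, Real.sqrt_mul Real.pi_pos.le, one_div]
          apply inv_anti₀ hst
          nlinarith [one_le_sqrt_pi, hst.le]
  · have he0 : e ≠ 0 := fun h => by simp [h] at he
    have hs1 : 1 ≤ e.toReal := by
      rw [← ENNReal.toReal_one]
      exact ENNReal.toReal_mono htop he
    set s := e.toReal with hsdef
    have hs0 : 0 < s := lt_of_lt_of_le one_pos hs1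
    rw [eLpNorm_eq_lintegral_rpow_enorm_toReal he0 htop]; simp only [enorm_eq_nnnorm]
    have hpt : ∀ x : ℝ, ((‖heatKernel t x‖₊ : ℝ≥0∞)) ^ s = ENNReal.ofReal (heatKernel t x ^ s) := by
      intro x
      rw [← enorm_eq_nnnorm, ← ofReal_norm, Real.norm_eq_abs, abs_of_nonneg (hk_nonneg t x),
        ← ENNReal.ofReal_rpow_of_nonneg (hk_nonneg t x) hs0.le]
    simp only [← hsdef, hpt]
    rw [← ofReal_integral_eq_lintegral_ofReal (hk_rpow_integrable ht hs0)
      (Filter.Eventually.of_forall fun x => Real.rpow_nonneg (hk_nonneg t x) s)]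
    rw [hk_rpow_integral ht hs0]
    have hI0 : 0 ≤ (2 * Real.sqrt (Real.pi * t)) ^ (-s) * Real.sqrt (Real.pi / (s / (4 * t))) :=
      mul_nonneg (Real.rpow_nonneg hD.le _) (Real.sqrt_nonneg _)
    have heq : (1 / e).toReal = 1 / s := by rw [one_div, one_div, ENNReal.toReal_inv]
    calc (ENNReal.ofReal ((2 * Real.sqrt (Real.pi * t)) ^ (-s)
            * Real.sqrt (Real.pi / (s / (4 * t))))) ^ (1 / e.toReal)
        = ENNReal.ofReal (((2 * Real.sqrt (Real.pi * t)) ^ (-s)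
            * Real.sqrt (Real.pi / (s / (4 * t)))) ^ (1 / s)) :=
          ENNReal.ofReal_rpow_of_nonneg hI0 (by positivity)
      _ ≤ ENNReal.ofReal (t ^ (((1 / e).toReal - 1) / 2)) := by
          apply ENNReal.ofReal_le_ofReal
          rw [heq]
          exact key_real_ineq ht ht1 hs1

lemma eLpNorm_lt_top_of_bdd {f : ℝ → ℝ} {K : ℝ} (hi : Integrable f (volume : Measure ℝ))
    (hb : ∀ x, ‖f x‖ ≤ K) {e : ℝ≥0∞} (he : 1 ≤ e) : eLpNorm f e volume < ⊤ := by
  by_cases htop : e = ∞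
  · subst htop
    rw [eLpNorm_exponent_top]
    exact lt_of_le_of_lt (eLpNormEssSup_le_of_ae_bound (Filter.Eventually.of_forall hb))
      ENNReal.ofReal_lt_top
  · have he0 : e ≠ 0 := fun h => by simp [h] at he
    have hs1 : 1 ≤ e.toReal := by
      rw [← ENNReal.toReal_one]
      exact ENNReal.toReal_mono htop he
    set s := e.toReal
    have hs0 : 0 < s := lt_of_lt_of_le one_pos hs1
    have hK0 : 0 ≤ K := le_trans (norm_nonneg _) (hb 0)
    rw [eLpNorm_eq_lintegral_rpow_enorm_toReal he0 htop]; simp only [enorm_eq_nnnorm]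
    apply ENNReal.rpow_lt_top_of_nonneg (by positivity)
    apply ne_of_lt
    have hpt : ∀ x : ℝ, ((‖f x‖₊ : ℝ≥0∞)) ^ s ≤ ENNReal.ofReal (K ^ (s - 1)) * ‖f x‖₊ := by
      intro x
      by_cases hx : (‖f x‖₊ : ℝ≥0∞) = 0
      · rw [hx, ENNReal.zero_rpow_of_pos hs0]
        exact zero_le
      · have hfx : (‖f x‖₊ : ℝ≥0∞) ≤ ENNReal.ofReal K := by
          rw [← enorm_eq_nnnorm, ← ofReal_norm]
          exact ENNReal.ofReal_le_ofReal (hb x)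
        calc ((‖f x‖₊ : ℝ≥0∞)) ^ s
            = ((‖f x‖₊ : ℝ≥0∞)) ^ (s - 1) * ((‖f x‖₊ : ℝ≥0∞)) ^ (1 : ℝ) := by
              rw [← ENNReal.rpow_add _ _ hx ENNReal.coe_ne_top]; congr 1; ring
          _ ≤ ENNReal.ofReal (K ^ (s - 1)) * ‖f x‖₊ := by
              rw [ENNReal.rpow_one]
              apply mul_le_mul' ?_ le_rfl
              rw [← ENNReal.ofReal_rpow_of_nonneg hK0 (by linarith)]
              exact ENNReal.rpow_le_rpow hfx (by linarith)
    calc ∫⁻ x, ((‖f x‖₊ : ℝ≥0∞)) ^ s ∂volume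
        ≤ ∫⁻ x, ENNReal.ofReal (K ^ (s - 1)) * ‖f x‖₊ ∂volume := lintegral_mono hpt
      _ = ENNReal.ofReal (K ^ (s - 1)) * ∫⁻ x, (‖f x‖₊ : ℝ≥0∞) ∂volume :=
          lintegral_const_mul' _ _ ENNReal.ofReal_ne_top
      _ < ⊤ := ENNReal.mul_lt_top ENNReal.ofReal_lt_top hi.2

/-- Sharpness of the growth estimate `‖F ∗ Θ_t‖_r = O(t^{-(1-1/q)/2})` as `t → 0⁺`:
if `ψ : (0,∞) → (0,∞)` with `ψ(t) = o(t^{-(1-1/q)/2})` as `t → 0⁺`, then there is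
`G ∈ L^p` such that `‖G ∗ Θ_t‖_r / ψ(t)` is unbounded as `t → 0⁺`. -/
theorem heat_estimate_sharp (p q r : ℝ≥0∞)
    (hp : 1 ≤ p) (hq : 1 ≤ q) (hr : 1 ≤ r)
    (hpqr : 1 / p + 1 / q = 1 + 1 / r)
    (ψ : ℝ → ℝ) (hψpos : ∀ t > (0:ℝ), 0 < ψ t)
    (hψo : Tendsto (fun t : ℝ => ψ t * t ^ ((1 - 1 / q.toReal) / 2))
      (nhdsWithin 0 (Set.Ioi 0)) (nhds 0)) :
    ∃ G : ℝ → ℝ, MemLp G p (volume : Measure ℝ) ∧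
      ∀ M : ℝ, ∃ᶠ t in nhdsWithin (0:ℝ) (Set.Ioi 0),
        M < (eLpNorm (fun x => ∫ y : ℝ, G y * heatKernel t (x - y)) r volume).toReal
              / ψ t := by
  classical
  have hp0 : p ≠ 0 := fun h => by simp [h] at hp
  have hr0 : r ≠ 0 := fun h => by simp [h] at hr
  have h1p : 1 / p ≤ 1 := by rw [one_div]; exact ENNReal.inv_le_one.mpr hp
  have h1q : 1 / q ≤ 1 := by rw [one_div]; exact ENNReal.inv_le_one.mpr hq
  have h1r : 1 / r ≤ 1 := by rw [one_div]; exact ENNReal.inv_le_one.mpr hr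
  have h1pt : 1 / p ≠ ⊤ := (lt_of_le_of_lt h1p ENNReal.one_lt_top).ne
  have h1qt : 1 / q ≠ ⊤ := (lt_of_le_of_lt h1q ENNReal.one_lt_top).ne
  have h1rt : 1 / r ≠ ⊤ := (lt_of_le_of_lt h1r ENNReal.one_lt_top).ne
  set P : ℝ := (1 / p).toReal with hPdef
  set R : ℝ := (1 / r).toReal with hRdef
  have hP0 : (0:ℝ) ≤ P := ENNReal.toReal_nonneg
  have hR0 : (0:ℝ) ≤ R := ENNReal.toReal_nonneg
  have hP1 : P ≤ 1 := by
    rw [hPdef]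
    have h := ENNReal.toReal_mono (show (1:ℝ≥0∞) ≠ ⊤ by simp) h1p
    rwa [ENNReal.toReal_one] at h
  have hR1 : R ≤ 1 := by
    rw [hRdef]
    have h := ENNReal.toReal_mono (show (1:ℝ≥0∞) ≠ ⊤ by simp) h1r
    rwa [ENNReal.toReal_one] at h
  have hQ1 : (1 / q).toReal ≤ 1 := by
    have h := ENNReal.toReal_mono (show (1:ℝ≥0∞) ≠ ⊤ by simp) h1q
    rwa [ENNReal.toReal_one] at h
  have hQ0 : (0:ℝ) ≤ (1 / q).toReal := ENNReal.toReal_nonneg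
  have hsumEq : P + (1 / q).toReal = 1 + R := by
    rw [hPdef, hRdef, ← ENNReal.toReal_add h1pt h1qt, hpqr,
      ENNReal.toReal_add (by simp) h1rt, ENNReal.toReal_one]
  have hRP : R ≤ P := by linarith
  have hαeq : (1 - 1 / q.toReal) / 2 = (P - R) / 2 := by
    have h1 : 1 / q.toReal = (1 / q).toReal := by
      rw [one_div, one_div, ENNReal.toReal_inv]
    rw [h1, show (1 / q).toReal = 1 + R - P by linarith]
    ring
  rw [hαeq] at hψo
  set c0 : ℝ := Real.exp (-2) / (2 * Real.pi) with hc0def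
  have hc0 : 0 < c0 := by positivity
  have hex : ∀ n : ℕ, ∃ u : ℝ, (0 < u ∧ u < 1 / ((n : ℝ) + 1)) ∧
      ψ u * u ^ ((P - R) / 2) < c0 * (1 / 2) ^ n / ((n : ℝ) + 1) := by
    intro n
    have hεpos : (0:ℝ) < c0 * (1 / 2) ^ n / ((n : ℝ) + 1) := by positivity
    have h1 : ∀ᶠ u in nhdsWithin (0:ℝ) (Set.Ioi 0),
        ψ u * u ^ ((P - R) / 2) < c0 * (1 / 2) ^ n / ((n : ℝ) + 1) :=
      hψo.eventually_lt_const hεpos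
    have h2 : ∀ᶠ u in nhdsWithin (0:ℝ) (Set.Ioi 0), u < 1 / ((n : ℝ) + 1) :=
      Filter.Eventually.filter_mono nhdsWithin_le_nhds
        (Iio_mem_nhds (by positivity : (0:ℝ) < 1 / ((n : ℝ) + 1)))
    have h3 : ∀ᶠ u in nhdsWithin (0:ℝ) (Set.Ioi 0), 0 < u := eventually_mem_nhdsWithin
    exact ((h3.and h2).and h1).exists
  choose T hT hTψ using hex
  have hT0 : ∀ n, 0 < T n := fun n => (hT n).1
  have hTlt : ∀ n, T n < 1 / ((n : ℝ) + 1) := fun n => (hT n).2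
  have hT1 : ∀ n, T n ≤ 1 := by
    intro n
    have h := hTlt n
    have h' : (1:ℝ) / ((n : ℝ) + 1) ≤ 1 := by
      rw [div_le_one (by positivity)]
      linarith [Nat.cast_nonneg (α := ℝ) n]
    linarith
  set b : ℕ → ℝ := fun n => (1 / 2) ^ n * T n ^ ((1 - P) / 2) with hbdef
  have hb0 : ∀ n, 0 < b n := fun n => mul_pos (by positivity) (Real.rpow_pos_of_pos (hT0 n) _)
  have hble : ∀ n, b n ≤ (1 / 2) ^ n := by
    intro n
    have h1 : T n ^ ((1 - P) / 2) ≤ 1 := Real.rpow_le_one (hT0 n).le (hT1 n) (by linarith)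
    calc b n = (1 / 2) ^ n * T n ^ ((1 - P) / 2) := rfl
      _ ≤ (1 / 2) ^ n * 1 := mul_le_mul_of_nonneg_left h1 (by positivity)
      _ = (1 / 2) ^ n := mul_one _
  set G : ℝ → ℝ := fun x => ∑' n, b n * heatKernel (T n) x with hGdef
  have hsumm : ∀ x : ℝ, x ≠ 0 → Summable fun n => b n * heatKernel (T n) x := by
    intro x hx
    apply Summable.of_nonneg_of_le
      (fun n => mul_nonneg (hb0 n).le (hk_nonneg _ _))
      (fun n => ?_) (summable_geometric_two.mul_right (2 / (Real.sqrt Real.pi * x ^ 2)))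
    exact mul_le_mul (hble n) (hk_le_decay (hT0 n) (hT1 n) hx) (hk_nonneg _ _) (by positivity)
  have hae0 : ∀ᵐ x : ℝ ∂volume, x ≠ 0 := by
    have h0 : volume ({0} : Set ℝ) = 0 := measure_singleton 0
    rw [ae_iff]
    convert h0 using 2
    ext y
    simp [not_not]
  set S : ℕ → ℝ → ℝ := fun N x => ∑ n ∈ Finset.range N, b n * heatKernel (T n) x with hSdef
  have hSmeas : ∀ N, AEStronglyMeasurable (S N) volume := fun N =>
    (continuous_finset_sum _ fun i _ => continuous_const.mul hk_continuous).aestronglyMeasurable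
  have hStend : ∀ᵐ x : ℝ ∂volume, Tendsto (fun N => S N x) atTop (𝓝 (G x)) := by
    filter_upwards [hae0] with x hx
    exact (hsumm x hx).hasSum.tendsto_sum_nat
  have hGmeas : AEStronglyMeasurable G volume :=
    aestronglyMeasurable_of_tendsto_ae atTop hSmeas hStend
  have hGnonneg : ∀ x, 0 ≤ G x := fun x =>
    tsum_nonneg fun n => mul_nonneg (hb0 n).le (hk_nonneg _ _)
  have hGbd : ∀ e : ℝ≥0∞, 1 ≤ e → P ≤ (1 / e).toReal →
      eLpNorm G e volume ≤ ENNReal.ofReal 2 := by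
    intro e he hPe
    have hterm : ∀ n, eLpNorm (fun x => b n * heatKernel (T n) x) e volume
        ≤ ENNReal.ofReal ((1 / 2) ^ n) := by
      intro n
      have h1 : (fun x => b n * heatKernel (T n) x) = b n • heatKernel (T n) := by
        funext x; simp [smul_eq_mul]
      rw [h1, eLpNorm_const_smul]
      have h2 : (‖b n‖₊ : ℝ≥0∞) = ENNReal.ofReal (b n) := Real.enorm_eq_ofReal (hb0 n).le
      have hbn : b n = (1 / 2) ^ n * T n ^ ((1 - P) / 2) := rfl
      calc (‖b n‖₊ : ℝ≥0∞) * eLpNorm (heatKernel (T n)) e volume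
          ≤ ENNReal.ofReal (b n) * ENNReal.ofReal (T n ^ (((1 / e).toReal - 1) / 2)) := by
            rw [h2]; exact mul_le_mul' le_rfl (hk_eLpNorm_le e he (hT0 n) (hT1 n))
        _ = ENNReal.ofReal (b n * T n ^ (((1 / e).toReal - 1) / 2)) :=
            (ENNReal.ofReal_mul (hb0 n).le).symm
        _ ≤ ENNReal.ofReal ((1 / 2) ^ n) := by
            apply ENNReal.ofReal_le_ofReal
            have hTn := hT0 n
            calc b n * T n ^ (((1 / e).toReal - 1) / 2)
                = (1 / 2) ^ n * (T n ^ ((1 - P) / 2) * T n ^ (((1 / e).toReal - 1) / 2)) := by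
                  rw [hbn]; ring
              _ = (1 / 2) ^ n * T n ^ ((1 - P) / 2 + ((1 / e).toReal - 1) / 2) := by
                  rw [← Real.rpow_add hTn]
              _ ≤ (1 / 2) ^ n * 1 := by
                  apply mul_le_mul_of_nonneg_left _ (by positivity)
                  apply Real.rpow_le_one hTn.le (hT1 n) (by linarith)
              _ = (1 / 2) ^ n := mul_one _
    have hSbd : ∀ N, eLpNorm (S N) e volume ≤ ENNReal.ofReal 2 := by
      intro N
      have h1 : S N = ∑ n ∈ Finset.range N, (fun x => b n * heatKernel (T n) x) := by
        funext x
        simp only [hSdef, Finset.sum_apply]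
      rw [h1]
      calc eLpNorm (∑ n ∈ Finset.range N, fun x => b n * heatKernel (T n) x) e volume
          ≤ ∑ n ∈ Finset.range N, eLpNorm (fun x => b n * heatKernel (T n) x) e volume :=
            eLpNorm_sum_le (fun i _ => (continuous_const.mul hk_continuous).aestronglyMeasurable) he
        _ ≤ ∑ n ∈ Finset.range N, ENNReal.ofReal ((1 / 2) ^ n) :=
            Finset.sum_le_sum fun i _ => hterm i
        _ = ENNReal.ofReal (∑ n ∈ Finset.range N, (1 / 2 : ℝ) ^ n) :=
            (ENNReal.ofReal_sum_of_nonneg fun i _ => by positivity).symm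
        _ ≤ ENNReal.ofReal 2 := by
            apply ENNReal.ofReal_le_ofReal
            exact le_trans
              (Summable.sum_le_tsum _ (fun i _ => by positivity) summable_geometric_two)
              tsum_geometric_two.le
    calc eLpNorm G e volume ≤ Filter.atTop.liminf fun N => eLpNorm (S N) e volume :=
          MeasureTheory.Lp.eLpNorm_lim_le_liminf_eLpNorm hSmeas G hStend
      _ ≤ Filter.atTop.liminf fun _ => ENNReal.ofReal 2 :=
          Filter.liminf_le_liminf (Filter.Eventually.of_forall hSbd)
      _ = ENNReal.ofReal 2 := Filter.liminf_const _
  have hGp : MemLp G p volume :=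
    ⟨hGmeas, lt_of_le_of_lt (hGbd p hp le_rfl) ENNReal.ofReal_lt_top⟩
  have hGint : Integrable G volume := by
    rw [← memLp_one_iff_integrable]
    refine ⟨hGmeas, lt_of_le_of_lt (hGbd 1 le_rfl ?_) ENNReal.ofReal_lt_top⟩
    simpa using hP1
  have hGge : ∀ n, ∀ᵐ x : ℝ ∂(volume : Measure ℝ), b n * heatKernel (T n) x ≤ G x := by
    intro n
    filter_upwards [hae0] with x hx
    exact Summable.le_tsum (hsumm x hx) n fun m _ => mul_nonneg (hb0 m).le (hk_nonneg _ _)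
  refine ⟨G, hGp, ?_⟩
  intro M
  have key : ∀ n : ℕ, M < (n : ℝ) + 1 →
      M < (eLpNorm (fun x => ∫ y : ℝ, G y * heatKernel (T n) (x - y)) r volume).toReal
            / ψ (T n) := by
    intro n hMn
    have ht : 0 < T n := hT0 n
    have ht1 : T n ≤ 1 := hT1 n
    have hψt : 0 < ψ (T n) := hψpos _ ht
    have hD := D_pos ht
    set conv : ℝ → ℝ := fun x => ∫ y : ℝ, G y * heatKernel (T n) (x - y) with hconvdef
    have hmeas_y : ∀ x : ℝ, AEStronglyMeasurable (fun y => G y * heatKernel (T n) (x - y)) volume := by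
      intro x
      exact hGmeas.mul
        ((hk_continuous.comp (continuous_const.sub continuous_id)).aestronglyMeasurable)
    have hint_x : ∀ x : ℝ, Integrable (fun y => G y * heatKernel (T n) (x - y)) volume := by
      intro x
      apply Integrable.mono' (hGint.mul_const (1 / (2 * Real.sqrt (Real.pi * T n)))) (hmeas_y x)
      filter_upwards with y
      rw [Real.norm_eq_abs, abs_mul, abs_of_nonneg (hGnonneg y), abs_of_nonneg (hk_nonneg _ _)]
      exact mul_le_mul_of_nonneg_left (hk_le_sup ht _) (hGnonneg y)
    have hconv_nonneg : ∀ x, 0 ≤ conv x := fun x =>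
      integral_nonneg fun y => mul_nonneg (hGnonneg y) (hk_nonneg _ _)
    have hconv_eq : conv =
        MeasureTheory.convolution G (heatKernel (T n)) (ContinuousLinearMap.mul ℝ ℝ) volume := by
      funext x
      simp [hconvdef, MeasureTheory.convolution, ContinuousLinearMap.mul_apply']
    have hconv_int : Integrable conv volume := by
      rw [hconv_eq]
      exact hGint.integrable_convolution _ (hk_integrable ht)
    have hconv_bd : ∀ x, ‖conv x‖ ≤ (∫ y, G y) * (1 / (2 * Real.sqrt (Real.pi * T n))) := by
      intro x
      rw [Real.norm_eq_abs, abs_of_nonneg (hconv_nonneg x)]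
      calc conv x ≤ ∫ y, G y * (1 / (2 * Real.sqrt (Real.pi * T n))) := by
            apply integral_mono (hint_x x) (hGint.mul_const _)
            intro y
            exact mul_le_mul_of_nonneg_left (hk_le_sup ht _) (hGnonneg y)
        _ = (∫ y, G y) * (1 / (2 * Real.sqrt (Real.pi * T n))) := integral_mul_const _ _
    have hfin : eLpNorm conv r volume < ⊤ := eLpNorm_lt_top_of_bdd hconv_int hconv_bd hr
    set s0 := Real.sqrt (T n) with hs0def
    have hs0 : 0 < s0 := Real.sqrt_pos.mpr ht
    set L : ℝ := b n * (Real.exp (-1) / (2 * Real.sqrt (Real.pi * T n))) ^ 2 * (2 * s0)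
      with hLdef
    have hLpos : 0 < L := by
      exact _root_.mul_pos (_root_.mul_pos (hb0 n) (by positivity)) (by positivity)
    have hlow : ∀ x ∈ Set.Icc (-s0) s0, L ≤ conv x := by
      intro x hx
      have hint1 : Integrable
          (fun y => (b n * heatKernel (T n) y) * heatKernel (T n) (x - y)) volume := by
        apply Integrable.mono'
          (((hk_integrable ht).const_mul (b n)).mul_const (1 / (2 * Real.sqrt (Real.pi * T n))))
        · exact ((continuous_const.mul hk_continuous).mul
            (hk_continuous.comp (continuous_const.sub continuous_id))).aestronglyMeasurable
        · filter_upwards with y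
          rw [Real.norm_eq_abs, abs_mul, abs_of_nonneg (mul_nonneg (hb0 n).le (hk_nonneg _ _)),
            abs_of_nonneg (hk_nonneg _ _)]
          exact mul_le_mul_of_nonneg_left (hk_le_sup ht _)
            (mul_nonneg (hb0 n).le (hk_nonneg _ _))
      have h1 : (∫ y, (b n * heatKernel (T n) y) * heatKernel (T n) (x - y)) ≤ conv x := by
        apply integral_mono_ae hint1 (hint_x x)
        filter_upwards [hGge n] with y hy
        exact mul_le_mul_of_nonneg_right hy (hk_nonneg _ _)
      have h2 : (∫ y in Set.Icc (-s0) s0, (b n * heatKernel (T n) y) * heatKernel (T n) (x - y))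
          ≤ ∫ y, (b n * heatKernel (T n) y) * heatKernel (T n) (x - y) := by
        apply setIntegral_le_integral hint1
        filter_upwards with y
        exact mul_nonneg (mul_nonneg (hb0 n).le (hk_nonneg _ _)) (hk_nonneg _ _)
      have h3 : (∫ _y in Set.Icc (-s0) s0,
            ((b n * (Real.exp (-1) / (2 * Real.sqrt (Real.pi * T n))))
              * (Real.exp (-1) / (2 * Real.sqrt (Real.pi * T n)))))
          ≤ ∫ y in Set.Icc (-s0) s0, (b n * heatKernel (T n) y) * heatKernel (T n) (x - y) := by
        apply setIntegral_mono_on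
        · exact integrableOn_const (by rw [Real.volume_Icc]; exact ENNReal.ofReal_ne_top)
        · exact hint1.integrableOn
        · exact measurableSet_Icc
        · intro y hy
          have hy1 : |y| ≤ 2 * Real.sqrt (T n) := by
            rw [abs_le]
            constructor
            · have := hy.1; rw [hs0def] at *; linarith [Real.sqrt_nonneg (T n)]
            · have := hy.2; rw [hs0def] at *; linarith [Real.sqrt_nonneg (T n)]
          have hxy : |x - y| ≤ 2 * Real.sqrt (T n) := by
            rw [abs_le]
            obtain ⟨hx1, hx2⟩ := hx
            obtain ⟨hy1', hy2'⟩ := hy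
            rw [hs0def] at *
            constructor <;> linarith
          apply mul_le_mul
          · exact mul_le_mul_of_nonneg_left (hk_ge ht hy1) (hb0 n).le
          · exact hk_ge ht hxy
          · positivity
          · exact mul_nonneg (hb0 n).le (hk_nonneg _ _)
      have h4 : (∫ _y in Set.Icc (-s0) s0,
            ((b n * (Real.exp (-1) / (2 * Real.sqrt (Real.pi * T n))))
              * (Real.exp (-1) / (2 * Real.sqrt (Real.pi * T n)))))
          = (2 * s0) * ((b n * (Real.exp (-1) / (2 * Real.sqrt (Real.pi * T n))))
              * (Real.exp (-1) / (2 * Real.sqrt (Real.pi * T n)))) := by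
        rw [setIntegral_const, Real.volume_real_Icc, max_eq_left (by linarith), smul_eq_mul,
          show s0 - -s0 = 2 * s0 by ring]
      have hLeq : L = (2 * s0) * ((b n * (Real.exp (-1) / (2 * Real.sqrt (Real.pi * T n))))
          * (Real.exp (-1) / (2 * Real.sqrt (Real.pi * T n)))) := by
        rw [hLdef]; ring
      rw [hLeq, ← h4]
      exact le_trans h3 (le_trans h2 h1)
    have hind : eLpNorm ((Set.Icc (-s0) s0).indicator fun _ => L) r volume
        ≤ eLpNorm conv r volume := by
      apply eLpNorm_mono
      intro x
      by_cases hx : x ∈ Set.Icc (-s0) s0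
      · rw [Set.indicator_of_mem hx, Real.norm_eq_abs, Real.norm_eq_abs,
          abs_of_nonneg hLpos.le, abs_of_nonneg (hconv_nonneg x)]
        exact hlow x hx
      · rw [Set.indicator_of_notMem hx, norm_zero]
        exact norm_nonneg _
    have hvol : volume (Set.Icc (-s0) s0) = ENNReal.ofReal (2 * s0) := by
      rw [Real.volume_Icc]; congr 1; ring
    have hindval : eLpNorm ((Set.Icc (-s0) s0).indicator fun _ => L) r volume
        = (‖L‖₊ : ℝ≥0∞) * ENNReal.ofReal (2 * s0) ^ (1 / r.toReal) := by
      rw [eLpNorm_indicator_const' measurableSet_Icc ?_ hr0, hvol]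
      rfl
      rw [hvol]
      exact ne_of_gt (ENNReal.ofReal_pos.mpr (by linarith))
    have hRr : R = 1 / r.toReal := by
      rw [hRdef, one_div, one_div, ENNReal.toReal_inv]
    have htoReal : L * (2 * s0) ^ R ≤ (eLpNorm conv r volume).toReal := by
      have h5 : (‖L‖₊ : ℝ≥0∞) * ENNReal.ofReal (2 * s0) ^ (1 / r.toReal)
          ≤ eLpNorm conv r volume := by rw [← hindval]; exact hind
      have h6 := ENNReal.toReal_mono hfin.ne h5
      calc L * (2 * s0) ^ R
          = ((‖L‖₊ : ℝ≥0∞) * ENNReal.ofReal (2 * s0) ^ (1 / r.toReal)).toReal := by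
            rw [ENNReal.toReal_mul, ← ENNReal.toReal_rpow, ENNReal.toReal_ofReal (by positivity),
              ENNReal.coe_toReal, coe_nnnorm, Real.norm_eq_abs, abs_of_nonneg hLpos.le, hRr]
        _ ≤ (eLpNorm conv r volume).toReal := h6
    -- main chain in ℝ
    have hbn : b n = (1 / 2) ^ n * T n ^ ((1 - P) / 2) := rfl
    have hs01 : T n ^ ((1:ℝ) / 2) = s0 := by
      rw [hs0def, Real.sqrt_eq_rpow]
    have e1 : s0 ^ R = T n ^ (R / 2) := by
      rw [hs0def, Real.sqrt_eq_rpow, ← Real.rpow_mul ht.le]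
      congr 1; ring
    have hDsq : (Real.exp (-1) / (2 * Real.sqrt (Real.pi * T n))) ^ 2
        = Real.exp (-2) / (4 * (Real.pi * T n)) := by
      rw [div_pow, sq, ← Real.exp_add, mul_pow, Real.sq_sqrt (by positivity)]
      norm_num
    have hchain : c0 * (1 / 2) ^ n * T n ^ ((R - P) / 2) ≤ L * (2 * s0) ^ R := by
      have hs0R : s0 ^ R ≤ (2 * s0) ^ R :=
        Real.rpow_le_rpow hs0.le (by linarith) hR0
      calc c0 * (1 / 2) ^ n * T n ^ ((R - P) / 2)
          = b n * (Real.exp (-2) / (4 * (Real.pi * T n))) * (2 * s0) * T n ^ (R / 2) := by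
            rw [hbn, hc0def, ← hs01]
            have hcomb : T n ^ ((1 - P) / 2) * T n ^ ((1:ℝ) / 2) * T n ^ (R / 2)
                = T n ^ ((R - P) / 2) * T n := by
              have h9 : T n ^ ((R - P) / 2) * T n = T n ^ ((R - P) / 2 + 1) := by
                rw [Real.rpow_add ht, Real.rpow_one]
              rw [h9, ← Real.rpow_add ht, ← Real.rpow_add ht]
              congr 1 <;> ring
            field_simp
            linear_combination (-4 : ℝ) * hcomb
        _ ≤ b n * (Real.exp (-2) / (4 * (Real.pi * T n))) * (2 * s0) * (2 * s0) ^ R := by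
            apply mul_le_mul_of_nonneg_left (by rw [← e1]; exact hs0R)
            exact mul_nonneg (mul_nonneg (hb0 n).le (by positivity)) (by positivity)
        _ = L * (2 * s0) ^ R := by rw [hLdef, hDsq]
    have hA1 : c0 * (1 / 2) ^ n * T n ^ ((R - P) / 2) ≤ (eLpNorm conv r volume).toReal :=
      le_trans hchain htoReal
    have hψsmall : ψ (T n) * T n ^ ((P - R) / 2) < c0 * (1 / 2) ^ n / ((n : ℝ) + 1) := hTψ n
    have htp : 0 < T n ^ ((P - R) / 2) := Real.rpow_pos_of_pos ht _
    have htRP : T n ^ ((R - P) / 2) = (T n ^ ((P - R) / 2))⁻¹ := by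
      rw [← Real.rpow_neg ht.le]
      congr 1; ring
    rw [lt_div_iff₀ hψt]
    have h7 : (((n : ℝ) + 1)) * (ψ (T n) * T n ^ ((P - R) / 2)) < c0 * (1 / 2) ^ n := by
      have := (lt_div_iff₀ (by positivity : (0:ℝ) < (n : ℝ) + 1)).mp hψsmall
      linarith [this]
    calc M * ψ (T n) < ((n : ℝ) + 1) * ψ (T n) := mul_lt_mul_of_pos_right hMn hψt
      _ = (((n : ℝ) + 1) * (ψ (T n) * T n ^ ((P - R) / 2))) * T n ^ ((R - P) / 2) := by
          rw [htRP]; field_simp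
      _ ≤ (c0 * (1 / 2) ^ n) * T n ^ ((R - P) / 2) :=
          mul_le_mul_of_nonneg_right h7.le (Real.rpow_nonneg ht.le _)
      _ ≤ (eLpNorm conv r volume).toReal := hA1
  have hTtend : Tendsto T atTop (nhdsWithin (0:ℝ) (Set.Ioi 0)) := by
    rw [tendsto_nhdsWithin_iff]
    constructor
    · exact squeeze_zero (fun n => (hT0 n).le) (fun n => (hTlt n).le)
        tendsto_one_div_add_atTop_nhds_zero_nat
    · exact Filter.Eventually.of_forall fun n => hT0 n
  apply hTtend.frequently
  rw [Filter.frequently_atTop]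
  intro N
  refine ⟨max N ⌈M⌉₊, le_max_left _ _, ?_⟩
  apply key
  calc M ≤ (⌈M⌉₊ : ℝ) := Nat.le_ceil M
    _ ≤ ((max N ⌈M⌉₊ : ℕ) : ℝ) := by exact_mod_cast le_max_right N ⌈M⌉₊
    _ < ((max N ⌈M⌉₊ : ℕ) : ℝ) + 1 := by linarith
end

section
/- Let 1 ≤ s < p ≤ ∞. There exists F ∈ L^p(ℝ) such that for each t > 0, F ∗ Θ_t ∉ L^s(ℝ). Concretely, F(x) = x^{-1/p}/log²(x) for x ≥ e and F(x) = 0 otherwise, works. -/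
open MeasureTheory Real ENNReal Set Filter Topology


lemma aux_not_int {b X : ℝ} (hb : b < 1) (hX : 0 < X) :
    ¬ IntegrableOn (fun x : ℝ => x ^ (-b)) (Ioi X) := by
  intro h
  rw [integrableOn_Ioi_rpow_iff hX] at h
  linarith

-- integrability of x⁻¹ * (log x)^(-(2q)) on Ioi (exp 1), for q > 1/2
lemma aux_int {q : ℝ} (hq : 1 < q) :
    IntegrableOn (fun x : ℝ => x⁻¹ * Real.log x ^ (-(2*q))) (Ioi (Real.exp 1)) := by
  have h2q : (1:ℝ) < 2*q - 1 := by linarith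
  set m : ℝ := 1 - 2*q with hm
  have key : ∀ x ∈ Ioi (Real.exp 1),
      HasDerivAt (fun y : ℝ => -(2*q-1)⁻¹ * Real.log y ^ m)
        (x⁻¹ * Real.log x ^ (-(2*q))) x := by
    intro x hx
    have hx1 : (1:ℝ) < x := lt_trans (by nlinarith [Real.add_one_le_exp 1]) hx
    have hx0 : (0:ℝ) < x := by linarith
    have hlog : 0 < Real.log x := Real.log_pos hx1
    have h1 : HasDerivAt Real.log x⁻¹ x := Real.hasDerivAt_log hx0.ne'
    have h2 : HasDerivAt (fun y : ℝ => y ^ m) (m * Real.log x ^ (m-1)) (Real.log x) :=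
      Real.hasDerivAt_rpow_const (Or.inl hlog.ne')
    have h3 := (h2.comp x h1).const_mul (-(2*q-1)⁻¹)
    refine h3.congr_deriv ?_
    symm
    have hme : m - 1 = -(2*q) := by rw [hm]; ring
    rw [hme]
    field_simp
    ring
  have hcont : ContinuousWithinAt (fun y : ℝ => -(2*q-1)⁻¹ * Real.log y ^ m)
      (Ici (Real.exp 1)) (Real.exp 1) := by
    apply ContinuousAt.continuousWithinAt
    have : Real.log (Real.exp 1) ≠ 0 := by rw [Real.log_exp]; norm_num
    exact (continuousAt_const.mul ((Real.continuousAt_log (Real.exp_pos 1).ne').rpow_const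
      (Or.inl this)))
  have htend : Tendsto (fun y : ℝ => -(2*q-1)⁻¹ * Real.log y ^ m) atTop (𝓝 0) := by
    have h1 : Tendsto (fun z : ℝ => z ^ m) atTop (𝓝 0) := by
      have := tendsto_rpow_neg_atTop (y := 2*q - 1) (by linarith)
      convert this using 2
      rw [hm]; ring
    have := (h1.comp Real.tendsto_log_atTop).const_mul (-(2*q-1)⁻¹)
    simpa using this
  have hpos : ∀ x ∈ Ioi (Real.exp 1), 0 ≤ x⁻¹ * Real.log x ^ (-(2*q)) := by
    intro x hx
    have hx1 : (1:ℝ) < x := lt_trans (by nlinarith [Real.add_one_le_exp 1]) hx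
    have hx0 : (0:ℝ) < x := by linarith
    have hlog : 0 < Real.log x := Real.log_pos hx1
    positivity
  exact integrableOn_Ioi_deriv_of_nonneg hcont key hpos htend


set_option maxHeartbeats 1000000 in
/-- For `1 ≤ s < p ≤ ∞`, there is `F ∈ L^p(ℝ)` such that `F ∗ Θ_t ∉ L^s(ℝ)` for
each `t > 0`.  Concretely `F(x) = x^{-1/p}/log²x` for `x ≥ e`, `F(x) = 0` otherwise,
works (for `p = ∞` the factor `x^{-1/p}` is `1`, as `(⊤ : ℝ≥0∞).toReal = 0`). -/
theorem exists_memLp_convolution_not_memLp (s p : ℝ≥0∞)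
    (hs : 1 ≤ s) (hsp : s < p) :
    ∃ F : ℝ → ℝ,
      (F = fun x : ℝ =>
        if Real.exp 1 ≤ x then x ^ (-(1 / p.toReal)) / (Real.log x) ^ 2 else 0) ∧
      MemLp F p (volume : Measure ℝ) ∧
      ∀ t > (0:ℝ),
        ¬ MemLp (fun x => ∫ y : ℝ, F y * heatKernel t (x - y)) s (volume : Measure ℝ) := by
  set q : ℝ := p.toReal with hqdef
  set r : ℝ := s.toReal with hrdef
  set F : ℝ → ℝ := fun x : ℝ =>
      if Real.exp 1 ≤ x then x ^ (-(1 / q)) / (Real.log x) ^ 2 else 0 with hFdef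
  have hs_ne_top : s ≠ ⊤ := hsp.ne_top
  have hs0 : s ≠ 0 := (zero_lt_one.trans_le hs).ne'
  have hr1 : (1:ℝ) ≤ r := by
    have := ENNReal.toReal_mono hs_ne_top hs
    simpa using this
  have hr0 : (0:ℝ) < r := by linarith
  have hq0 : 0 ≤ q := ENNReal.toReal_nonneg
  -- exponent of decay
  have ha1 : r / q < 1 := by
    by_cases hp : p = ⊤
    · rw [hqdef, hp]; simp
    · have hq1 : 1 < q := by
        have h1p : (1:ℝ≥0∞) < p := lt_of_le_of_lt hs hsp
        have := (ENNReal.toReal_lt_toReal ENNReal.one_ne_top hp).mpr h1p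
        simpa using this
      have hrq : r < q := (ENNReal.toReal_lt_toReal hs_ne_top hp).mpr hsp
      rw [div_lt_one (by linarith)]; exact hrq
  -- basic facts about F
  have he1 : (1:ℝ) < Real.exp 1 := by nlinarith [Real.add_one_le_exp 1]
  have hlog1 : ∀ x : ℝ, Real.exp 1 ≤ x → 1 ≤ Real.log x := by
    intro x hx
    calc (1:ℝ) = Real.log (Real.exp 1) := (Real.log_exp 1).symm
    _ ≤ Real.log x := Real.log_le_log (Real.exp_pos 1) hx
  have hF_nonneg : ∀ x, 0 ≤ F x := by
    intro x
    rw [hFdef]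
    dsimp only
    split_ifs with h
    · have hx : (0:ℝ) < x := lt_of_lt_of_le (Real.exp_pos 1) h
      positivity
    · exact le_rfl
  have hF_le_one : ∀ x, F x ≤ 1 := by
    intro x
    rw [hFdef]; dsimp only
    split_ifs with h
    · have hx1 : (1:ℝ) ≤ x := le_trans he1.le h
      have hnum : x ^ (-(1/q)) ≤ 1 :=
        Real.rpow_le_one_of_one_le_of_nonpos hx1 (neg_nonpos.mpr (by positivity))
      have hden : (1:ℝ) ≤ Real.log x ^ 2 := by nlinarith [hlog1 x h]
      calc x ^ (-(1/q)) / Real.log x ^ 2 ≤ 1 / 1 := by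
            apply div_le_div₀ (by norm_num) hnum (by norm_num) hden
      _ = 1 := by norm_num
    · norm_num
  have hF_meas : Measurable F := by
    rw [hFdef]
    apply Measurable.ite (measurableSet_le measurable_const measurable_id)
    · measurability
    · exact measurable_const
  have hF_anti : ∀ a b : ℝ, Real.exp 1 ≤ a → a ≤ b → F b ≤ F a := by
    intro a b ha hab
    have ha0 : (0:ℝ) < a := lt_of_lt_of_le (Real.exp_pos 1) ha
    have hb0 : (0:ℝ) < b := lt_of_lt_of_le ha0 hab
    rw [hFdef]; dsimp only
    rw [if_pos ha, if_pos (ha.trans hab)]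
    have hnum : b ^ (-(1/q)) ≤ a ^ (-(1/q)) := by
      rw [Real.rpow_neg ha0.le, Real.rpow_neg hb0.le]
      exact inv_anti₀ (Real.rpow_pos_of_pos ha0 _)
        (Real.rpow_le_rpow ha0.le hab (by positivity))
    have hden : Real.log a ^ 2 ≤ Real.log b ^ 2 := by
      have h1 := hlog1 a ha
      have h2 := Real.log_le_log ha0 hab
      nlinarith
    have hdpos : (0:ℝ) < Real.log a ^ 2 := by nlinarith [hlog1 a ha]
    exact div_le_div₀ (Real.rpow_nonneg ha0.le _) hnum hdpos hden
  have hmemF : MemLp F p volume := by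
    by_cases hp : p = ⊤
    · rw [hp]
      apply memLp_top_of_bound hF_meas.aestronglyMeasurable 1
      exact ae_of_all _ fun x => by
        rw [Real.norm_eq_abs, abs_of_nonneg (hF_nonneg x)]; exact hF_le_one x
    · have hp0 : p ≠ 0 := (zero_lt_one.trans_le (hs.trans hsp.le)).ne'
      have hq1 : 1 < q := by
        have h1p : (1:ℝ≥0∞) < p := lt_of_le_of_lt hs hsp
        have := (ENNReal.toReal_lt_toReal ENNReal.one_ne_top hp).mpr h1p
        simpa using this
      have hqne : q ≠ 0 := by linarith
      have hint : Integrable (fun x => ‖F x‖ ^ q) := by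
        rw [← integrableOn_iff_integrable_of_support_subset
          (s := Ici (Real.exp 1)) ?_]
        · rw [integrableOn_Ici_iff_integrableOn_Ioi]
          apply (aux_int hq1).congr_fun ?_ measurableSet_Ioi
          intro x hx
          have hxe : Real.exp 1 ≤ x := le_of_lt hx
          have hx0 : (0:ℝ) < x := lt_of_lt_of_le (Real.exp_pos 1) hxe
          have hl1 : (1:ℝ) ≤ Real.log x := hlog1 x hxe
          have hl0 : (0:ℝ) < Real.log x := by linarith
          have hFx : F x = x ^ (-(1/q)) / Real.log x ^ 2 := by
            rw [hFdef]; dsimp only; rw [if_pos hxe]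
          dsimp only
          symm
          rw [Real.norm_eq_abs, abs_of_nonneg (hF_nonneg x), hFx,
            Real.div_rpow (Real.rpow_nonneg hx0.le _) (by positivity),
            ← Real.rpow_natCast (Real.log x) 2,
            ← Real.rpow_mul hx0.le, ← Real.rpow_mul hl0.le]
          have e1 : -(1/q) * q = -1 := by field_simp
          have e2 : ((2:ℕ):ℝ) * q = 2*q := by norm_num
          rw [e1, e2, Real.rpow_neg_one, div_eq_mul_inv, ← Real.rpow_neg hl0.le]
        · intro x hx
          simp only [Function.mem_support] at hx
          by_contra hc
          simp only [mem_Ici, not_le] at hc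
          apply hx
          rw [hFdef]; dsimp only; rw [if_neg (not_le.mpr hc)]
          simp [Real.zero_rpow hqne]
      refine (memLp_norm_rpow_iff hF_meas.aestronglyMeasurable hp0 hp).mp ?_
      rw [ENNReal.div_self hp0 hp]
      exact memLp_one_iff_integrable.mpr hint
  refine ⟨F, by rw [hFdef], hmemF, ?_⟩
  intro t ht hmem
  have hπt : 0 < Real.pi * t := mul_pos Real.pi_pos ht
  have hsq : 0 < Real.sqrt (Real.pi * t) := Real.sqrt_pos.mpr hπt
  have h4t : (0:ℝ) < 4*t := by linarith
  have hK_pos : ∀ z, 0 < heatKernel t z := fun z =>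
    div_pos (Real.exp_pos _) (by positivity)
  have hK_int : Integrable (fun z => heatKernel t z) := by
    have h1 : Integrable (fun z : ℝ => Real.exp (-(1/(4*t)) * z^2)) :=
      integrable_exp_neg_mul_sq (by positivity)
    refine (h1.div_const (2 * Real.sqrt (Real.pi * t))).congr (ae_of_all _ fun z => ?_)
    simp only [heatKernel]
    congr 1
    field_simp
  set c₁ : ℝ := Real.exp (-(1/(4*t))) / (2 * Real.sqrt (Real.pi * t)) with hc₁def
  have hc₁ : 0 < c₁ := div_pos (Real.exp_pos _) (by positivity)
  have hKge : ∀ z : ℝ, 0 ≤ z → z ≤ 1 → c₁ ≤ heatKernel t z := by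
    intro z h0 h1'
    rw [hc₁def]
    simp only [heatKernel]
    gcongr
    rw [← neg_div, div_le_div_iff₀ h4t h4t]
    nlinarith [mul_nonneg (by nlinarith : (0:ℝ) ≤ 1 - z^2) h4t.le]
  -- integrability of the convolution integrand
  have hGint : ∀ x : ℝ, Integrable (fun y => F y * heatKernel t (x - y)) := by
    intro x
    refine (hK_int.comp_sub_left x).bdd_mul (c := 1) hF_meas.aestronglyMeasurable (ae_of_all _ fun y => ?_)
    rw [Real.norm_eq_abs, abs_of_nonneg (hF_nonneg y)]
    exact hF_le_one y
  set G : ℝ → ℝ := fun x => ∫ y : ℝ, F y * heatKernel t (x - y) with hGdef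
  -- lower bound for the convolution
  have hG_lb : ∀ x : ℝ, Real.exp 1 + 1 ≤ x → c₁ * F x ≤ G x := by
    intro x hx
    have key : (∫ y in Icc (x-1) x, F y * heatKernel t (x - y)) ≤ G x :=
      setIntegral_le_integral (hGint x)
        (ae_of_all _ fun y => mul_nonneg (hF_nonneg y) (hK_pos _).le)
    have lower : (∫ y in Icc (x-1) x, F x * c₁) ≤
        ∫ y in Icc (x-1) x, F y * heatKernel t (x - y) := by
      refine setIntegral_mono_on ?_ (hGint x).integrableOn measurableSet_Icc ?_
      · exact integrableOn_const (by rw [Real.volume_Icc]; exact ofReal_ne_top)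
      · intro y hy
        obtain ⟨hy1, hy2⟩ := hy
        have hye : Real.exp 1 ≤ y := by linarith
        refine mul_le_mul (hF_anti y x hye hy2) (hKge _ (by linarith) (by linarith))
          hc₁.le (hF_nonneg y)
    have hconst : (∫ y in Icc (x-1) x, F x * c₁) = F x * c₁ := by
      rw [setIntegral_const, Real.volume_real_Icc]
      norm_num
    rw [hconst] at lower
    calc c₁ * F x = F x * c₁ := mul_comm _ _
    _ ≤ G x := le_trans lower key
  -- choose the exponent b and threshold X
  set b : ℝ := (r/q + 1)/2 with hbdef
  have hab : r/q < b := by rw [hbdef]; linarith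
  have hb1 : b < 1 := by rw [hbdef]; linarith
  have hlittle : (fun x : ℝ => Real.log x ^ (2*r)) =o[atTop]
      fun x : ℝ => x ^ (b - r/q) := isLittleO_log_rpow_rpow_atTop (2*r) (by linarith)
  have hcr : (0:ℝ) < c₁ ^ r := Real.rpow_pos_of_pos hc₁ r
  obtain ⟨X₀, hX₀⟩ := Filter.eventually_atTop.mp (hlittle.def hcr)
  set X : ℝ := max X₀ (Real.exp 1 + 1) with hXdef
  have hXpos : 0 < X := lt_of_lt_of_le (by positivity : (0:ℝ) < Real.exp 1 + 1) (le_max_right X₀ _)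
  have hbound : ∀ x : ℝ, X < x → x ^ (-b) ≤ ‖G x‖ ^ r := by
    intro x hx
    have hxX0 : X₀ ≤ x := le_trans (le_max_left _ _) hx.le
    have hxe1 : Real.exp 1 + 1 ≤ x := le_trans (le_max_right _ _) hx.le
    have hxe : Real.exp 1 ≤ x := by linarith
    have hx0 : (0:ℝ) < x := lt_of_lt_of_le (Real.exp_pos 1) hxe
    have hl1 : (1:ℝ) ≤ Real.log x := hlog1 x hxe
    have hl0 : (0:ℝ) < Real.log x := by linarith
    have hFx : F x = x ^ (-(1/q)) / Real.log x ^ 2 := by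
      rw [hFdef]; dsimp only; rw [if_pos hxe]
    have hFr : F x ^ r = x ^ (-(r/q)) / Real.log x ^ (2*r) := by
      rw [hFx, Real.div_rpow (Real.rpow_nonneg hx0.le _) (by positivity),
        ← Real.rpow_natCast (Real.log x) 2, ← Real.rpow_mul hx0.le,
        ← Real.rpow_mul hl0.le]
      have e1 : -(1/q) * r = -(r/q) := by ring
      have e2 : ((2:ℕ):ℝ) * r = 2*r := by norm_num
      rw [e1, e2]
    have hstep1 : x ^ (-b) ≤ c₁ ^ r * F x ^ r := by
      have hlog_bound : Real.log x ^ (2*r) ≤ c₁^r * x ^ (b - r/q) := by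
        have := hX₀ x hxX0
        rwa [Real.norm_eq_abs, Real.norm_eq_abs,
          abs_of_nonneg (Real.rpow_nonneg hl0.le _),
          abs_of_nonneg (Real.rpow_nonneg hx0.le _)] at this
      have hL : 0 < Real.log x ^ (2*r) := Real.rpow_pos_of_pos hl0 _
      rw [hFr, ← mul_div_assoc, le_div_iff₀ hL]
      calc x ^ (-b) * Real.log x ^ (2*r)
          ≤ x ^ (-b) * (c₁^r * x ^ (b - r/q)) :=
            mul_le_mul_of_nonneg_left hlog_bound (Real.rpow_nonneg hx0.le _)
      _ = c₁ ^ r * x ^ (-(r/q)) := by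
          rw [show (-(r/q)) = -b + (b - r/q) by ring, Real.rpow_add hx0]
          ring
    have hstep2 : c₁ ^ r * F x ^ r = (c₁ * F x) ^ r :=
      (Real.mul_rpow hc₁.le (hF_nonneg x)).symm
    have hstep3 : (c₁ * F x) ^ r ≤ (G x) ^ r :=
      Real.rpow_le_rpow (mul_nonneg hc₁.le (hF_nonneg x)) (hG_lb x hxe1) hr0.le
    have hG0 : 0 ≤ G x := le_trans (mul_nonneg hc₁.le (hF_nonneg x)) (hG_lb x hxe1)
    have hstep4 : (G x) ^ r ≤ ‖G x‖ ^ r := by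
      refine Real.rpow_le_rpow hG0 ?_ hr0.le
      rw [Real.norm_eq_abs]
      exact le_abs_self _
    linarith [hstep1, hstep3, hstep4, hstep2]
  have hGr : Integrable (fun x => ‖G x‖ ^ r) := hmem.integrable_norm_rpow hs0 hs_ne_top
  have hint2 : IntegrableOn (fun x : ℝ => x ^ (-b)) (Ioi X) := by
    refine Integrable.mono hGr.integrableOn ?_ ?_
    · exact (Measurable.aestronglyMeasurable (by fun_prop))
    · rw [ae_restrict_iff' measurableSet_Ioi]
      refine ae_of_all _ fun x hx => ?_
      have hx0 : 0 < x := lt_trans hXpos hx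
      rw [Real.norm_eq_abs, Real.norm_eq_abs, abs_of_nonneg (Real.rpow_nonneg hx0.le _),
        abs_of_nonneg (Real.rpow_nonneg (norm_nonneg _) r)]
      exact hbound x hx
  exact aux_not_int hb1 hXpos hint2
end

section
/- If F ∈ L^p(ℝ) for some 1 ≤ p ≤ ∞, F ≥ 0, and F is decreasing on [c,∞), then for x > c and t > 0, F ∗ Θ_t(x) ≥ F(x) · (1/√π) ∫_0^{(x-c)/(2√t)} e^{-y²} dy. -/
open MeasureTheory Real ENNReal

lemma heatKernel_pos {t : ℝ} (ht : 0 < t) (u : ℝ) : 0 < heatKernel t u := by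
  have := Real.pi_pos
  exact div_pos (Real.exp_pos _) (by positivity)

lemma continuous_heatKernel (t : ℝ) : Continuous (heatKernel t) := by
  unfold heatKernel
  fun_prop

lemma memLp_heatKernel_comp {t : ℝ} (ht : 0 < t) (x : ℝ) (q : ℝ≥0∞) (hq : 1 ≤ q) :
    MemLp (fun y => heatKernel t (x - y)) q (volume : Measure ℝ) := by
  have hpi := Real.pi_pos
  have hmeas : AEStronglyMeasurable (fun y => heatKernel t (x - y)) (volume : Measure ℝ) :=
    ((continuous_heatKernel t).comp (continuous_const.sub continuous_id)).aestronglyMeasurable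
  have hq0 : q ≠ 0 := (lt_of_lt_of_le zero_lt_one hq).ne'
  by_cases hqtop : q = ∞
  · subst hqtop
    refine memLp_top_of_bound hmeas (1 / (2 * Real.sqrt (Real.pi * t))) ?_
    filter_upwards with y
    rw [Real.norm_eq_abs, abs_of_pos (heatKernel_pos ht _)]
    unfold heatKernel
    apply div_le_div_of_nonneg_right _ (by positivity)
    rw [Real.exp_le_one_iff, neg_div]
    exact neg_nonpos.2 (div_nonneg (sq_nonneg _) (by positivity))
  · rw [← memLp_norm_rpow_iff hmeas hq0 hqtop, ENNReal.div_self hq0 hqtop,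
      memLp_one_iff_integrable]
    have hr : 0 < q.toReal := ENNReal.toReal_pos hq0 hqtop
    have hb : 0 < q.toReal / (4 * t) := by positivity
    have key : (fun y => ‖heatKernel t (x - y)‖ ^ q.toReal) =
        fun y => ((2 * Real.sqrt (Real.pi * t)) ^ q.toReal)⁻¹ *
          Real.exp (-(q.toReal / (4 * t)) * (x - y) ^ 2) := by
      funext y
      rw [Real.norm_eq_abs, abs_of_pos (heatKernel_pos ht _)]
      unfold heatKernel
      rw [div_eq_mul_inv, Real.mul_rpow (Real.exp_pos _).le (by positivity),
        Real.inv_rpow (by positivity), ← Real.exp_mul, mul_comm]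
      congr 2
      field_simp
    rw [key]
    have hI : Integrable (fun y => Real.exp (-(q.toReal / (4 * t)) * (x - y) ^ 2)) volume :=
      (integrable_comp_sub_left (fun z => Real.exp (-(q.toReal / (4 * t)) * z ^ 2)) x).2
        (integrable_exp_neg_mul_sq hb)
    exact hI.const_mul _

/-- If `F ∈ L^p`, `F ≥ 0` and `F` is decreasing on `[c,∞)`, then for `x > c`, `t > 0`,
`F ∗ Θ_t(x) ≥ F(x)·(1/√π)∫_0^{(x-c)/(2√t)} e^{-y²} dy`. -/
theorem convolution_heatKernel_lower_bound (p : ℝ≥0∞) (hp : 1 ≤ p)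
    (F : ℝ → ℝ) (hF : MemLp F p (volume : Measure ℝ))
    (hFpos : ∀ x, 0 ≤ F x) (c : ℝ) (hdec : AntitoneOn F (Set.Ici c))
    (x t : ℝ) (hx : c < x) (ht : 0 < t) :
    F x * (1 / Real.sqrt Real.pi) *
        ∫ y in (0:ℝ)..((x - c) / (2 * Real.sqrt t)), Real.exp (-y ^ 2) ≤
      ∫ y : ℝ, F y * heatKernel t (x - y) := by
  have hpi := Real.pi_pos
  set g : ℝ → ℝ := fun y => heatKernel t (x - y) with hgdef
  set q : ℝ≥0∞ := (1 - p⁻¹)⁻¹ with hqdef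
  have hq1 : 1 ≤ q := by
    rw [← ENNReal.inv_le_one, hqdef, inv_inv]
    exact tsub_le_self
  have hpq : (1 : ℝ≥0∞) / 1 = 1 / p + 1 / q := by
    rw [hqdef, one_div, one_div, one_div, inv_inv, inv_one,
      add_tsub_cancel_of_le (ENNReal.inv_le_one.2 hp)]
  have hgq : MemLp g q volume := memLp_heatKernel_comp ht x q hq1
  have hint : Integrable (fun y => F y * g y) volume := by
    have h := memLp_one_iff_integrable.1 (hgq.smul hF (hpqr := ⟨by simpa [one_div] using hpq.symm⟩))
    exact h
  have hg_pos : ∀ y, 0 < g y := fun y => heatKernel_pos ht _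
  have hgint : Integrable g volume := memLp_one_iff_integrable.1
    (memLp_heatKernel_comp ht x 1 le_rfl)
  have step1 : ∫ y in Set.Ioc c x, F y * g y ≤ ∫ y, F y * g y :=
    setIntegral_le_integral hint
      (ae_of_all _ fun y => mul_nonneg (hFpos y) (hg_pos y).le)
  have step2 : ∫ y in Set.Ioc c x, F x * g y ≤ ∫ y in Set.Ioc c x, F y * g y := by
    refine setIntegral_mono_on ((hgint.const_mul (F x)).integrableOn)
      hint.integrableOn measurableSet_Ioc fun y hy => ?_
    exact mul_le_mul_of_nonneg_right (hdec hy.1.le hx.le hy.2) (hg_pos y).le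
  have step3 : ∫ y in Set.Ioc c x, F x * g y = F x * ∫ y in c..x, g y := by
    rw [intervalIntegral.integral_of_le hx.le, MeasureTheory.integral_const_mul]
  have hs : (0:ℝ) < 2 * Real.sqrt t := by positivity
  have h3 : ∀ y : ℝ, heatKernel t (2 * Real.sqrt t * y)
      = (1 / (2 * Real.sqrt (Real.pi * t))) * Real.exp (-y ^ 2) := by
    intro y
    unfold heatKernel
    have harg : -(2 * Real.sqrt t * y) ^ 2 / (4 * t) = -y ^ 2 := by
      rw [mul_pow, mul_pow, Real.sq_sqrt ht.le]
      field_simp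
      ring
    rw [harg, div_eq_mul_inv, one_div, mul_comm]
  have h2 : ∫ y in (0:ℝ)..((x - c) / (2 * Real.sqrt t)), heatKernel t (2 * Real.sqrt t * y)
      = (2 * Real.sqrt t)⁻¹ • ∫ u in (0:ℝ)..(x - c), heatKernel t u := by
    have hb2 : 2 * Real.sqrt t * ((x - c) / (2 * Real.sqrt t)) = x - c := by
      field_simp
    rw [intervalIntegral.integral_comp_mul_left (heatKernel t) hs.ne', mul_zero, hb2]
  have key : ∫ y in c..x, g y
      = (1 / Real.sqrt Real.pi) *
        ∫ y in (0:ℝ)..((x - c) / (2 * Real.sqrt t)), Real.exp (-y ^ 2) := by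
    have h1 : ∫ y in c..x, g y = ∫ u in (0:ℝ)..(x - c), heatKernel t u := by
      rw [hgdef, intervalIntegral.integral_comp_sub_left (heatKernel t) x, sub_self]
    rw [h1]
    have h2' : ∫ u in (0:ℝ)..(x - c), heatKernel t u
        = (2 * Real.sqrt t) * ∫ y in (0:ℝ)..((x - c) / (2 * Real.sqrt t)),
            heatKernel t (2 * Real.sqrt t * y) := by
      rw [h2, smul_eq_mul, ← mul_assoc, mul_inv_cancel₀ hs.ne', one_mul]
    rw [h2']
    simp only [h3]
    rw [intervalIntegral.integral_const_mul]
    rw [Real.sqrt_mul Real.pi_pos.le]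
    have hsp : Real.sqrt Real.pi > 0 := Real.sqrt_pos.2 hpi
    have hst : Real.sqrt t > 0 := Real.sqrt_pos.2 ht
    field_simp
  calc F x * (1 / Real.sqrt Real.pi) *
        ∫ y in (0:ℝ)..((x - c) / (2 * Real.sqrt t)), Real.exp (-y ^ 2)
      = F x * ∫ y in c..x, g y := by rw [key]; ring
    _ = ∫ y in Set.Ioc c x, F x * g y := step3.symm
    _ ≤ ∫ y in Set.Ioc c x, F y * g y := step2
    _ ≤ ∫ y, F y * g y := step1
end

section
/- Let 1 ≤ p ≤ ∞ with conjugate q, F ∈ L^p(ℝ), and let ψ be absolutely continuous and differentiable with ψ ∈ L^q, ψ' ∈ L^q, and ψ' bounded on each compact interval. Then (F ∗ ψ)'(x) = (F ∗ ψ')(x) for every x ∈ ℝ. -/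
open MeasureTheory Real ENNReal Filter Topology

lemma holder_integrable {r r' : ℝ≥0∞} (hrr' : 1/r + 1/r' = 1)
    {f g : ℝ → ℝ} (hf : MemLp f r volume) (hg : MemLp g r' volume) :
    Integrable (fun y => f y * g y) volume := by
  rw [← memLp_one_iff_integrable]
  have h := haveI : ENNReal.HolderTriple r r' 1 := ⟨by simpa using hrr'⟩
    hg.smul (φ := f) (p := r) (q := r') (r := 1) hf
  simpa [Pi.smul_apply, smul_eq_mul, Pi.mul_def] using h

lemma holder_bound {r r' : ℝ≥0∞} (hrr' : 1/r + 1/r' = 1)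
    {f g : ℝ → ℝ} (hf : MemLp f r volume) (hg : MemLp g r' volume) :
    ∫ y, ‖f y * g y‖ ≤ (eLpNorm f r volume * eLpNorm g r' volume).toReal := by
  have hmul := holder_integrable hrr' hf hg
  rw [integral_norm_eq_lintegral_enorm hmul.1, ← eLpNorm_one_eq_lintegral_enorm]
  apply ENNReal.toReal_mono (ENNReal.mul_ne_top hf.2.ne hg.2.ne)
  have := haveI : ENNReal.HolderTriple r r' 1 := ⟨by simpa using hrr'⟩
    eLpNorm_smul_le_mul_eLpNorm (μ := volume) (f := g) (φ := f) hg.1 hf.1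
    (p := r) (q := r') (r := 1)
  simpa [Pi.smul_apply, smul_eq_mul, Pi.mul_def] using this

lemma conv_continuous {r r' : ℝ≥0∞} (hr : 1 ≤ r) (hrtop : r ≠ ∞) (hrr' : 1/r + 1/r' = 1)
    {f g : ℝ → ℝ} (hf : MemLp f r volume) (hg : MemLp g r' volume) :
    Continuous fun s => ∫ y, f (s - y) * g y := by
  haveI : Fact (1 ≤ r) := ⟨hr⟩
  set fL := hf.toLp f with hfL
  let c : C(ℝ × ℝ, ℝ) := ⟨fun p => p.1 - p.2, by continuity⟩
  let Φ : ℝ → C(ℝ, ℝ) := fun s => c.curry s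
  have hΦ : Continuous Φ := (c.curry).continuous
  have hmp : ∀ s : ℝ, MeasurePreserving (Φ s) volume volume :=
    fun s => Measure.measurePreserving_sub_left volume s
  let T : ℝ → Lp ℝ r volume := fun s => Lp.compMeasurePreserving (Φ s) (hmp s) fL
  have hT : Continuous T :=
    Continuous.compMeasurePreservingLp continuous_const hΦ hmp hrtop
  have key : ∀ s, ∫ y, f (s - y) * g y = ∫ y, (T s : ℝ → ℝ) y * g y := by
    intro s
    refine integral_congr_ae ?_
    have h1 : (T s : ℝ → ℝ) =ᵐ[volume] fL ∘ (Φ s) :=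
      Lp.coeFn_compMeasurePreserving fL (hmp s)
    have h3 : (fL ∘ (Φ s) : ℝ → ℝ) =ᵐ[volume] (f ∘ (Φ s)) :=
      (hmp s).quasiMeasurePreserving.ae_eq_comp (hf.coeFn_toLp)
    filter_upwards [h1, h3] with y hy1 hy3
    simp only [Function.comp_apply] at hy1 hy3
    show f (s - y) * g y = (T s : ℝ → ℝ) y * g y
    rw [hy1, hy3]
    rfl
  have hH : LipschitzWith (eLpNorm g r' volume).toNNReal
      (fun u : Lp ℝ r volume => ∫ y, (u : ℝ → ℝ) y * g y) := by
    apply LipschitzWith.of_dist_le_mul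
    intro u v
    have hu : Integrable (fun y => (u : ℝ → ℝ) y * g y) volume :=
      holder_integrable hrr' (Lp.memLp u) hg
    have hv : Integrable (fun y => (v : ℝ → ℝ) y * g y) volume :=
      holder_integrable hrr' (Lp.memLp v) hg
    rw [Real.dist_eq, ← integral_sub hu hv]
    have heq : ∀ y, (u : ℝ → ℝ) y * g y - (v : ℝ → ℝ) y * g y
        = ((u : ℝ → ℝ) y - (v : ℝ → ℝ) y) * g y := fun y => by ring
    simp_rw [heq]
    have huv : MemLp (fun y => (u : ℝ → ℝ) y - (v : ℝ → ℝ) y) r volume :=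
      (Lp.memLp u).sub (Lp.memLp v)
    calc |∫ y, ((u : ℝ → ℝ) y - (v : ℝ → ℝ) y) * g y|
        ≤ ∫ y, ‖((u : ℝ → ℝ) y - (v : ℝ → ℝ) y) * g y‖ := by
          rw [← Real.norm_eq_abs]; exact norm_integral_le_integral_norm _
      _ ≤ (eLpNorm (fun y => (u : ℝ → ℝ) y - (v : ℝ → ℝ) y) r volume
            * eLpNorm g r' volume).toReal := holder_bound hrr' huv hg
      _ = (eLpNorm g r' volume).toNNReal * dist u v := by
          rw [ENNReal.toReal_mul, Lp.dist_def]
          exact mul_comm _ _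
  have : (fun s => ∫ y, f (s - y) * g y)
      = (fun u : Lp ℝ r volume => ∫ y, (u : ℝ → ℝ) y * g y) ∘ T := funext key
  rw [this]
  exact hH.continuous.comp hT

set_option maxHeartbeats 1000000 in
theorem deriv_conv_aux (p q : ℝ≥0∞) (hp : 1 ≤ p) (hpq : 1 / p + 1 / q = 1)
    (F : ℝ → ℝ) (hFm : StronglyMeasurable F) (hF : MemLp F p (volume : Measure ℝ))
    (ψ : ℝ → ℝ)
    (hAC : ∀ a b : ℝ, ψ b - ψ a = ∫ y in a..b, deriv ψ y)
    (hψq : MemLp ψ q (volume : Measure ℝ))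
    (hψ'q : MemLp (deriv ψ) q (volume : Measure ℝ)) :
    ∀ x : ℝ, HasDerivAt (fun x => ∫ y : ℝ, F y * ψ (x - y))
      (∫ y : ℝ, F y * deriv ψ (x - y)) x := by
  have hq : 1 ≤ q := by
    have h1 : 1 / q ≤ 1 / p + 1 / q := le_add_self
    rw [hpq] at h1
    rwa [one_div, ENNReal.inv_le_one] at h1
  have hD : Measurable (deriv ψ) := measurable_deriv ψ
  have hmp : ∀ s : ℝ, MeasurePreserving (fun y : ℝ => s - y) volume volume :=
    fun s => Measure.measurePreserving_sub_left volume s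
  have hDs : ∀ s : ℝ, MemLp (fun y => deriv ψ (s - y)) q volume := fun s =>
    (hψ'q.comp_measurePreserving (hmp s) : MemLp (deriv ψ ∘ fun y => s - y) q volume)
  have hψs : ∀ s : ℝ, MemLp (fun y => ψ (s - y)) q volume := fun s =>
    (hψq.comp_measurePreserving (hmp s) : MemLp (ψ ∘ fun y => s - y) q volume)
  have hInt : ∀ s : ℝ, Integrable (fun y => F y * deriv ψ (s - y)) volume :=
    fun s => holder_integrable hpq hF (hDs s)
  have hIntψ : ∀ s : ℝ, Integrable (fun y => F y * ψ (s - y)) volume :=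
    fun s => holder_integrable hpq hF (hψs s)
  set C : ℝ := (eLpNorm F p volume * eLpNorm (deriv ψ) q volume).toReal with hC
  have hbound : ∀ s : ℝ, (∫ y, ‖F y * deriv ψ (s - y)‖) ≤ C := by
    intro s
    refine (holder_bound hpq hF (hDs s)).trans ?_
    have e1 : eLpNorm (fun y => deriv ψ (s - y)) q volume = eLpNorm (deriv ψ) q volume := by
      rw [show (fun y => deriv ψ (s - y)) = deriv ψ ∘ (fun y : ℝ => s - y) from rfl]
      exact eLpNorm_comp_measurePreserving hψ'q.1 (hmp s)
    rw [e1]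
  -- continuity of the convolution with deriv ψ
  have hcont : Continuous fun s => ∫ y, F y * deriv ψ (s - y) := by
    rcases eq_or_ne q ∞ with hqtop | hqtop
    · have hptop : p ≠ ∞ := by
        intro hp'
        rw [hp', hqtop] at hpq
        simp at hpq
      have h' : ∀ s : ℝ, (∫ y, F y * deriv ψ (s - y)) = ∫ y, F (s - y) * deriv ψ y := by
        intro s
        rw [← integral_sub_left_eq_self (fun y => F y * deriv ψ (s - y)) volume s]
        congr 1
        funext x
        simp
      simp_rw [h']
      exact conv_continuous hp hptop hpq hF hψ'q
    · have h' : ∀ s : ℝ, (∫ y, F y * deriv ψ (s - y)) = ∫ y, deriv ψ (s - y) * F y := by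
        intro s; congr 1; funext y; ring
      simp_rw [h']
      refine conv_continuous hq hqtop ?_ hψ'q hF
      rw [add_comm]; exact hpq
  -- Fubini
  have base : ∀ a b : ℝ, a ≤ b →
      (∫ y, F y * (∫ s in Set.Ioc a b, deriv ψ (s - y)))
        = ∫ s in Set.Ioc a b, ∫ y, F y * deriv ψ (s - y) := by
    intro a b hab
    haveI hfin : IsFiniteMeasure (volume.restrict (Set.Ioc a b)) :=
      ⟨by rw [Measure.restrict_apply_univ]; exact measure_Ioc_lt_top⟩
    have hmeas : AEStronglyMeasurable (Function.uncurry fun s y => F y * deriv ψ (s - y))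
        ((volume.restrict (Set.Ioc a b)).prod volume) := by
      apply Measurable.aestronglyMeasurable
      exact (hFm.measurable.comp measurable_snd).mul (hD.comp (measurable_fst.sub measurable_snd))
    have hintprod : Integrable (Function.uncurry fun s y => F y * deriv ψ (s - y))
        ((volume.restrict (Set.Ioc a b)).prod volume) := by
      rw [integrable_prod_iff hmeas]
      refine ⟨ae_of_all _ fun s => hInt s, ?_⟩
      refine Integrable.mono' (integrable_const C) hmeas.norm.integral_prod_right'
        (ae_of_all _ fun s => ?_)
      rw [Real.norm_eq_abs, abs_of_nonneg (integral_nonneg fun y => norm_nonneg _)]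
      exact hbound s
    simp_rw [← integral_const_mul]
    exact (integral_integral_swap hintprod).symm
  have claimI : ∀ a b : ℝ,
      (∫ y, F y * (∫ s in a..b, deriv ψ (s - y)))
        = ∫ s in a..b, ∫ y, F y * deriv ψ (s - y) := by
    have baseI : ∀ a b : ℝ, a ≤ b →
        (∫ y, F y * (∫ s in a..b, deriv ψ (s - y)))
          = ∫ s in a..b, ∫ y, F y * deriv ψ (s - y) := by
      intro a b hab
      simp_rw [intervalIntegral.integral_of_le hab]
      exact base a b hab
    intro a b
    rcases le_total a b with hab | hba
    · exact baseI a b hab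
    · simp_rw [intervalIntegral.integral_symm b a, mul_neg, integral_neg]
      exact congrArg Neg.neg (baseI b a hba)
  intro x₀
  set h : ℝ → ℝ := fun s => ∫ y, F y * deriv ψ (s - y) with hh
  have FTC : HasDerivAt (fun x => ∫ s in x₀..x, h s) (h x₀) x₀ :=
    intervalIntegral.integral_hasDerivAt_right (hcont.intervalIntegrable x₀ x₀)
      (hcont.stronglyMeasurableAtFilter _ _) hcont.continuousAt
  have hdiff : ∀ x : ℝ, (∫ y, F y * ψ (x - y))
      = (∫ y, F y * ψ (x₀ - y)) + ∫ s in x₀..x, h s := by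
    intro x
    have e1 : ∀ y : ℝ, ψ (x - y) - ψ (x₀ - y) = ∫ s in x₀..x, deriv ψ (s - y) := by
      intro y
      rw [intervalIntegral.integral_comp_sub_right (deriv ψ) y]
      exact hAC (x₀ - y) (x - y)
    have e2 : (∫ y, F y * ψ (x - y)) - (∫ y, F y * ψ (x₀ - y)) = ∫ s in x₀..x, h s := by
      rw [← integral_sub (hIntψ x) (hIntψ x₀)]
      have e3 : ∀ y : ℝ, F y * ψ (x - y) - F y * ψ (x₀ - y)
          = F y * (∫ s in x₀..x, deriv ψ (s - y)) := by
        intro y; rw [← mul_sub, e1 y]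
      simp_rw [e3]
      exact claimI x₀ x
    linarith [e2]
  have hD2 : HasDerivAt (fun x => (∫ y, F y * ψ (x₀ - y)) + ∫ s in x₀..x, h s) (h x₀) x₀ :=
    FTC.const_add _
  exact hD2.congr_of_eventuallyEq (Filter.Eventually.of_forall hdiff)

/-- Differentiation of convolutions: if `F ∈ L^p`, `ψ` is differentiable and absolutely
continuous with `ψ ∈ L^q`, `ψ' ∈ L^q`, and `ψ'` bounded on each compact interval (`q`
conjugate to `p`), then `(F ∗ ψ)'(x) = F ∗ ψ'(x)` for every `x`. -/
theorem deriv_convolution' (p q : ℝ≥0∞) (hp : 1 ≤ p) (hpq : 1 / p + 1 / q = 1)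
    (F : ℝ → ℝ) (hF : MemLp F p (volume : Measure ℝ))
    (ψ : ℝ → ℝ) (hψdiff : Differentiable ℝ ψ)
    (hAC : ∀ a b : ℝ, ψ b - ψ a = ∫ y in a..b, deriv ψ y)
    (hψq : MemLp ψ q (volume : Measure ℝ))
    (hψ'q : MemLp (deriv ψ) q (volume : Measure ℝ))
    (hbdd : ∀ K : Set ℝ, IsCompact K → ∃ M : ℝ, ∀ x ∈ K, |deriv ψ x| ≤ M) :
    ∀ x : ℝ, HasDerivAt (fun x => ∫ y : ℝ, F y * ψ (x - y))
      (∫ y : ℝ, F y * deriv ψ (x - y)) x := by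
  intro x
  set F' := hF.1.mk F with hF'def
  have hFF' : F =ᵐ[volume] F' := hF.1.ae_eq_mk
  have hF'm : StronglyMeasurable F' := hF.1.stronglyMeasurable_mk
  have hF' : MemLp F' p volume := hF.ae_eq hFF'
  have key := deriv_conv_aux p q hp hpq F' hF'm hF' ψ hAC hψq hψ'q x
  have e1 : ∀ z : ℝ, (∫ y, F y * ψ (z - y)) = ∫ y, F' y * ψ (z - y) := fun z =>
    integral_congr_ae (by filter_upwards [hFF'] with y hy; rw [hy])
  have e2 : (∫ y, F y * deriv ψ (x - y)) = ∫ y, F' y * deriv ψ (x - y) :=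
    integral_congr_ae (by filter_upwards [hFF'] with y hy; rw [hy])
  rw [e2, funext e1]
  exact key
end
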